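/- Let α, β ∈ (1,2), let d, e, ρ > 0, fix a point (x,y) and values d₊ = d₊(x,y) > 0, d₋ = d₋(x,y) > 0, e₊, e₋ > 0, and define h(θ₁,θ₂) = d₊ f_α(θ₁) + d₋ f_α(-θ₁) + ρ·(e₊ f_β(θ₂) + e₋ f_β(-θ₂)) and 𝓕(θ₁,θ₂) = d·q_α(θ₁) + e·ρ·q_β(θ₂). Then along the axis θ₂ = 0 one has the one-sided limit lim_{θ₁→0⁺} h(θ₁,0)/𝓕(θ₁,0) = (d₊+d₋)/(2d) − i·tan(απ/2)·(d₊−d₋)/(2d), and symmetrically lim_{θ₂→0⁺} h(0,θ₂)/𝓕(0,θ₂) = (e₊+e₋)/(2e) − i·tan(βπ/2)·(e₊−e₋)/(2e). -/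

import Mathlib

open scoped Real Topology ComplexConjugate
open Filter

/-- Alternating fractional binomial coefficients. -/
noncomputable def gcoef (γ : ℝ) (k : ℕ) : ℝ :=
  (-1 : ℝ) ^ k / (Nat.factorial k) * ∏ i ∈ Finset.range k, (γ - i)

/-- WSGD weights. -/
noncomputable def w (γ : ℝ) : ℕ → ℝ
  | 0 => γ / 2 * gcoef γ 0
  | (k + 1) => γ / 2 * gcoef γ (k + 1) + (2 - γ) / 2 * gcoef γ k

/-- The symbol `f_γ(ξ) = -∑_{k=-1}^∞ w_{k+1}^{(γ)} e^{ikξ}`. -/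
noncomputable def fsym (γ : ℝ) (ξ : ℝ) : ℂ :=
  -∑' k : ℕ, (w γ k : ℂ) * Complex.exp (Complex.I * ((k : ℂ) - 1) * (ξ : ℂ))

/-- `q_γ(ξ) = f_γ(ξ) + f_γ(-ξ)` (real-valued). -/
noncomputable def qsym (γ : ℝ) (ξ : ℝ) : ℂ := fsym γ ξ + fsym γ (-ξ)

/-- The variable-coefficient symbol
`h(θ₁,θ₂) = d₊f_α(θ₁) + d₋f_α(−θ₁) + ρ(e₊f_β(θ₂) + e₋f_β(−θ₂))`. -/
noncomputable def hsym (α β ρ dp dm ep em : ℝ) (θ₁ θ₂ : ℝ) : ℂ :=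
  (dp : ℂ) * fsym α θ₁ + (dm : ℂ) * fsym α (-θ₁) +
    (ρ : ℂ) * ((ep : ℂ) * fsym β θ₂ + (em : ℂ) * fsym β (-θ₂))

/-- `𝓕(θ₁,θ₂) = d·q_α(θ₁) + e·ρ·q_β(θ₂)` (real-valued). -/
noncomputable def FsymR (α β d e ρ : ℝ) (θ₁ θ₂ : ℝ) : ℝ :=
  d * (qsym α θ₁).re + e * ρ * (qsym β θ₂).re

noncomputable def Sfun (γ : ℝ) (z : ℂ) : ℂ := ∑' k, (gcoef γ k : ℂ) * z ^ k




lemma gcoef_zero (γ : ℝ) : gcoef γ 0 = 1 := by simp [gcoef]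

lemma gcoef_succ (γ : ℝ) (k : ℕ) :
    ((k : ℝ) + 1) * gcoef γ (k + 1) = ((k : ℝ) - γ) * gcoef γ k := by
  have hk : (Nat.factorial (k+1) : ℝ) = (k+1) * Nat.factorial k := by
    push_cast [Nat.factorial_succ]; ring
  have h1 : (Nat.factorial k : ℝ) ≠ 0 := Nat.cast_ne_zero.2 (Nat.factorial_ne_zero k)
  have h2 : ((k : ℝ) + 1) ≠ 0 := by positivity
  simp only [gcoef, Finset.prod_range_succ, pow_succ, hk]
  field_simp
  ring

lemma abs_gcoef_succ {γ : ℝ} (hγ : γ ≤ 2) (k : ℕ) (hk : 2 ≤ k) :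
    ((k : ℝ) + 1) * |gcoef γ (k + 1)| = ((k : ℝ) - γ) * |gcoef γ k| := by
  have h : ((k:ℝ) - γ) ≥ 0 := by
    have : (2:ℝ) ≤ k := by exact_mod_cast hk
    linarith
  have := gcoef_succ γ k
  have h2 : |((k : ℝ) + 1) * gcoef γ (k + 1)| = |((k : ℝ) - γ) * gcoef γ k| := by rw [this]
  rw [abs_mul, abs_mul, abs_of_nonneg (by positivity : (0:ℝ) ≤ (k:ℝ)+1), abs_of_nonneg h] at h2
  exact h2

lemma summable_abs_gcoef {γ : ℝ} (hγ1 : 1 < γ) (hγ2 : γ < 2) :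
    Summable (fun k => |gcoef γ k|) := by
  have hγ0 : 0 < γ := by linarith
  -- telescoping: γ * a (k+2) = (k+2) a (k+2) - (k+3) a (k+3)
  have key : ∀ n : ℕ, γ * (∑ k ∈ Finset.range n, |gcoef γ (k + 2)|) +
      ((n : ℝ) + 2) * |gcoef γ (n + 2)| = 2 * |gcoef γ 2| := by
    intro n
    induction n with
    | zero => simp
    | succ n ih =>
      rw [Finset.sum_range_succ]
      have h := abs_gcoef_succ (le_of_lt hγ2) (n + 2) (by omega)
      push_cast at h ⊢
      nlinarith [h]
  have hb : ∀ n, ∑ k ∈ Finset.range n, |gcoef γ (k + 2)| ≤ 2 * |gcoef γ 2| / γ := by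
    intro n
    have := key n
    have h2 : 0 ≤ ((n : ℝ) + 2) * |gcoef γ (n + 2)| := by positivity
    rw [le_div_iff₀ hγ0]
    nlinarith
  have h2 : Summable (fun k => |gcoef γ (k + 2)|) :=
    summable_of_sum_range_le (fun n => abs_nonneg _) hb
  exact (summable_nat_add_iff 2).1 h2






section
variable {γ : ℝ} (hγ1 : 1 < γ) (hγ2 : γ < 2)

lemma summable_kpow {r : ℝ} (hr0 : 0 < r) (hr : r < 1) {γ : ℝ} (hγ1 : 1 < γ) (hγ2 : γ < 2) :
    Summable (fun k : ℕ => |gcoef γ k| * ((k : ℝ) * r ^ (k - 1))) := by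
  have ha := summable_abs_gcoef hγ1 hγ2
  set M := ∑' k, |gcoef γ k| with hM
  have hb : ∀ k, |gcoef γ k| ≤ M := fun k => Summable.le_tsum ha k (fun j _ => abs_nonneg _)
  have hs : Summable (fun k : ℕ => M * ((k : ℝ) * r ^ (k - 1))) := by
    have h1 : Summable (fun k : ℕ => (k : ℝ) ^ 1 * r ^ k) :=
      summable_pow_mul_geometric_of_norm_lt_one 1 (by rw [Real.norm_eq_abs, abs_of_pos hr0]; exact hr)
    have h2 : Summable (fun k : ℕ => (M / r) * ((k : ℝ) ^ 1 * r ^ k)) := h1.mul_left _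
    have hM0 : 0 ≤ M := tsum_nonneg (fun k => abs_nonneg _)
    apply h2.of_nonneg_of_le
    · intro k
      positivity
    · intro k
      rcases Nat.eq_zero_or_pos k with hk | hk
      · subst hk; simp
      · have hre : r ^ (k - 1) = r ^ k / r := by
          rw [eq_div_iff hr0.ne', ← pow_succ]
          congr 1
          omega
        apply le_of_eq
        rw [hre]
        field_simp
  exact hs.of_nonneg_of_le (fun k => by positivity)
    (fun k => by
      have hk : (0:ℝ) ≤ (k : ℝ) * r ^ (k-1) := by positivity
      exact mul_le_mul_of_nonneg_right (hb k) hk)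

lemma summable_S {z : ℂ} (hz : ‖z‖ ≤ 1) (hγ1 : 1 < γ) (hγ2 : γ < 2) :
    Summable (fun k => (gcoef γ k : ℂ) * z ^ k) := by
  apply Summable.of_norm
  apply (summable_abs_gcoef hγ1 hγ2).of_nonneg_of_le (fun k => norm_nonneg _)
  intro k
  rw [norm_mul, norm_pow, Complex.norm_real, Real.norm_eq_abs]
  calc |gcoef γ k| * ‖z‖ ^ k ≤ |gcoef γ k| * 1 := by
        apply mul_le_mul_of_nonneg_left _ (abs_nonneg _)
        exact pow_le_one₀ (norm_nonneg z) hz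
    _ = |gcoef γ k| := mul_one _

lemma summable_S' {z : ℂ} (hz : ‖z‖ < 1) (hγ1 : 1 < γ) (hγ2 : γ < 2) :
    Summable (fun k : ℕ => (gcoef γ k : ℂ) * ((k : ℂ) * z ^ (k - 1))) := by
  set r : ℝ := (‖z‖ + 1) / 2 with hr
  have hr0 : 0 < r := by positivity
  have hr1 : r < 1 := by rw [hr]; linarith
  have hzr : ‖z‖ ≤ r := by rw [hr]; linarith
  apply Summable.of_norm
  apply (summable_kpow hr0 hr1 hγ1 hγ2).of_nonneg_of_le (fun k => norm_nonneg _)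
  intro k
  rw [norm_mul, norm_mul, norm_pow, Complex.norm_real, Real.norm_eq_abs, Complex.norm_natCast]
  apply mul_le_mul_of_nonneg_left _ (abs_nonneg _)
  exact mul_le_mul_of_nonneg_left (pow_le_pow_left₀ (norm_nonneg z) hzr _) (Nat.cast_nonneg k)

lemma hasDerivAt_Sfun {z : ℂ} (hz : ‖z‖ < 1) (hγ1 : 1 < γ) (hγ2 : γ < 2) :
    HasDerivAt (Sfun γ) (∑' k : ℕ, (gcoef γ k : ℂ) * ((k : ℂ) * z ^ (k - 1))) z := by
  set r : ℝ := (‖z‖ + 1) / 2 with hr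
  have hr0 : 0 < r := by positivity
  have hr1 : r < 1 := by rw [hr]; linarith
  have hzr : ‖z‖ < r := by rw [hr]; linarith
  have hopen : IsOpen (Metric.ball (0:ℂ) r) := Metric.isOpen_ball
  have hmem : z ∈ Metric.ball (0:ℂ) r := by simpa [Metric.mem_ball, dist_eq_norm] using hzr
  have := hasDerivAt_of_tendstoUniformlyOn (l := atTop) (f := fun n (y : ℂ) => ∑ k ∈ Finset.range n, (gcoef γ k : ℂ) * y ^ k)
    (f' := fun n (y : ℂ) => ∑ k ∈ Finset.range n, (gcoef γ k : ℂ) * ((k : ℂ) * y ^ (k - 1)))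
    (g := Sfun γ)
    (g' := fun y => ∑' k : ℕ, (gcoef γ k : ℂ) * ((k : ℂ) * y ^ (k - 1)))
    hopen ?_ ?_ ?_ hmem
  · exact this
  · apply tendstoUniformlyOn_tsum_nat (summable_kpow hr0 hr1 hγ1 hγ2)
    intro k y hy
    rw [norm_mul, norm_mul, norm_pow, Complex.norm_real, Real.norm_eq_abs, Complex.norm_natCast]
    have hyr : ‖y‖ ≤ r := by
      rw [Metric.mem_ball, dist_eq_norm, sub_zero] at hy
      exact hy.le
    apply mul_le_mul_of_nonneg_left _ (abs_nonneg _)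
    exact mul_le_mul_of_nonneg_left (pow_le_pow_left₀ (norm_nonneg y) hyr _) (Nat.cast_nonneg k)
  · apply Eventually.of_forall
    intro n y _
    apply HasDerivAt.fun_sum
    intro k _
    simpa using (hasDerivAt_pow k y).const_mul ((gcoef γ k : ℂ))
  · intro y hy
    have hyr : ‖y‖ ≤ 1 := by
      rw [Metric.mem_ball, dist_eq_norm, sub_zero] at hy
      linarith
    exact (summable_S hyr hγ1 hγ2).hasSum.tendsto_sum_nat
end





section
variable {γ : ℝ} (hγ1 : 1 < γ) (hγ2 : γ < 2)
include hγ1 hγ2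


omit hγ1 hγ2 in
lemma gcoef_succ' (k : ℕ) :
    ((k : ℂ) + 1) * (gcoef γ (k+1) : ℂ) = ((k : ℂ) - (γ:ℂ)) * (gcoef γ k : ℂ) := by
  exact_mod_cast congrArg (Complex.ofReal) (gcoef_succ γ k)

lemma Sfun_ode {z : ℂ} (hz : ‖z‖ < 1) :
    (1 - z) * (∑' k : ℕ, (gcoef γ k : ℂ) * ((k : ℂ) * z ^ (k - 1))) +
      (γ : ℂ) * Sfun γ z = 0 := by
  set c : ℕ → ℂ := fun k => (gcoef γ k : ℂ) with hc
  have hT : Summable (fun k : ℕ => c k * ((k : ℂ) * z ^ (k - 1))) := summable_S' hz hγ1 hγ2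
  have hS : Summable (fun k => c k * z ^ k) := summable_S hz.le hγ1 hγ2
  have hA : Summable (fun k : ℕ => c (k+1) * (((k : ℂ)+1) * z ^ k)) := by
    apply ((summable_nat_add_iff 1).2 hT).congr
    intro k
    push_cast
    simp
  have hB : Summable (fun k : ℕ => c k * ((k : ℂ) * z ^ k)) := by
    apply (hT.mul_left z).congr
    intro k
    cases k with
    | zero => simp
    | succ n => simp [pow_succ]; ring
  have hC : Summable (fun k : ℕ => (γ:ℂ) * (c k * z ^ k)) := hS.mul_left _
  have e1 : (∑' k : ℕ, c k * ((k : ℂ) * z ^ (k - 1))) =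
      ∑' k : ℕ, c (k+1) * (((k : ℂ)+1) * z ^ k) := by
    rw [Summable.tsum_eq_zero_add hT]
    simp only [Nat.cast_zero, zero_mul, mul_zero, zero_add]
    apply tsum_congr
    intro k
    push_cast
    simp
  have e2 : z * (∑' k : ℕ, c k * ((k : ℂ) * z ^ (k - 1))) =
      ∑' k : ℕ, c k * ((k : ℂ) * z ^ k) := by
    rw [← tsum_mul_left]
    apply tsum_congr
    intro k
    cases k with
    | zero => simp
    | succ n => simp [pow_succ]; ring
  have e3 : (γ : ℂ) * Sfun γ z = ∑' k : ℕ, (γ:ℂ) * (c k * z ^ k) := by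
    rw [Sfun, ← tsum_mul_left]
  rw [sub_mul, one_mul, e2, e1, e3]
  rw [← Summable.tsum_sub hA hB, ← Summable.tsum_add (hA.sub hB) hC]
  convert tsum_zero with k
  linear_combination z ^ k * (gcoef_succ' (γ := γ) k)

lemma Sfun_eq_cpow_ball {z : ℂ} (hz : ‖z‖ < 1) :
    Sfun γ z = (1 - z) ^ (γ : ℂ) := by
  have hmem : ∀ x ∈ Metric.ball (0:ℂ) 1, ‖x‖ < 1 := by
    intro x hx
    rw [Metric.mem_ball, dist_eq_norm, sub_zero] at hx
    exact hx
  have hslit : ∀ x ∈ Metric.ball (0:ℂ) 1, (1 - x) ∈ Complex.slitPlane := by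
    intro x hx
    rw [Complex.mem_slitPlane_iff]
    left
    have := Complex.abs_re_le_norm x
    have hx1 := hmem x hx
    simp only [Complex.sub_re, Complex.one_re]
    have : x.re < 1 := lt_of_le_of_lt (le_trans (le_abs_self _) this) hx1
    linarith
  have hne : ∀ x ∈ Metric.ball (0:ℂ) 1, (1 - x) ≠ 0 := fun x hx => Complex.slitPlane_ne_zero (hslit x hx)
  set G : ℂ → ℂ := fun x => Sfun γ x * Complex.exp (-(γ:ℂ) * Complex.log (1 - x)) with hG
  have hGderiv : ∀ x ∈ Metric.ball (0:ℂ) 1, HasDerivAt G 0 x := by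
    intro x hx
    have hS' := hasDerivAt_Sfun (hmem x hx) hγ1 hγ2
    have hlog : HasDerivAt (fun y : ℂ => Complex.log (1 - y)) ((-1) / (1 - x)) x :=
      HasDerivAt.clog ((hasDerivAt_id x).const_sub 1) (hslit x hx)
    have hE : HasDerivAt (fun y : ℂ => Complex.exp (-(γ:ℂ) * Complex.log (1 - y)))
        (Complex.exp (-(γ:ℂ) * Complex.log (1 - x)) * (-(γ:ℂ) * ((-1) / (1 - x)))) x :=
      (hlog.const_mul (-(γ:ℂ))).cexp
    have := hS'.mul hE
    refine this.congr_deriv ?_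
    have ode := Sfun_ode (γ := γ) hγ1 hγ2 (hmem x hx)
    have h1x := hne x hx
    rw [eq_comm]
    have hTeq : (∑' k : ℕ, (gcoef γ k : ℂ) * ((k:ℂ) * x ^ (k-1))) =
        -((γ:ℂ) * Sfun γ x) / (1 - x) := by
      rw [eq_div_iff h1x]
      linear_combination ode
    rw [hTeq]
    field_simp
    ring
  have hdiff : DifferentiableOn ℂ G (Metric.ball (0:ℂ) 1) := fun x hx =>
    ((hGderiv x hx).differentiableAt).differentiableWithinAt
  have hfd : ∀ x ∈ Metric.ball (0:ℂ) 1, fderivWithin ℂ G (Metric.ball (0:ℂ) 1) x = 0 := by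
    intro x hx
    rw [fderivWithin_of_isOpen Metric.isOpen_ball hx, (hGderiv x hx).hasFDerivAt.fderiv]
    ext y
    simp
  have h0 : (0:ℂ) ∈ Metric.ball (0:ℂ) 1 := by simp
  have hzs : z ∈ Metric.ball (0:ℂ) 1 := by
    rw [Metric.mem_ball, dist_eq_norm, sub_zero]
    exact hz
  have hconst : G z = G 0 :=
    (convex_ball (0:ℂ) 1).is_const_of_fderivWithin_eq_zero hdiff hfd hzs h0
  have hG0 : G 0 = 1 := by
    have hS0 : Sfun γ 0 = 1 := by
      rw [Sfun, tsum_eq_single 0]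
      · simp [gcoef_zero]
      · intro k hk
        cases k with
        | zero => exact absurd rfl hk
        | succ n => simp
    simp [hG, hS0]
  have key : Sfun γ z * Complex.exp (-(γ:ℂ) * Complex.log (1 - z)) = 1 := hconst.trans hG0
  have hinv : Complex.exp (-(γ:ℂ) * Complex.log (1 - z)) *
      Complex.exp ((γ:ℂ) * Complex.log (1 - z)) = 1 := by
    rw [← Complex.exp_add]; ring_nf; exact Complex.exp_zero
  calc Sfun γ z = Sfun γ z * (Complex.exp (-(γ:ℂ) * Complex.log (1 - z)) *
      Complex.exp ((γ:ℂ) * Complex.log (1 - z))) := by rw [hinv, mul_one]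
    _ = (Sfun γ z * Complex.exp (-(γ:ℂ) * Complex.log (1 - z))) *
        Complex.exp ((γ:ℂ) * Complex.log (1 - z)) := by ring
    _ = Complex.exp ((γ:ℂ) * Complex.log (1 - z)) := by rw [key, one_mul]
    _ = (1 - z) ^ (γ : ℂ) := by
        rw [Complex.cpow_def_of_ne_zero (hne z hzs), mul_comm]
end



section
variable {γ : ℝ} (hγ1 : 1 < γ) (hγ2 : γ < 2)
include hγ1 hγ2


lemma continuousOn_Sfun : ContinuousOn (Sfun γ) (Metric.closedBall (0:ℂ) 1) := by
  have hTU : TendstoUniformlyOn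
      (fun (n : ℕ) (y : ℂ) => ∑ k ∈ Finset.range n, (gcoef γ k : ℂ) * y ^ k)
      (Sfun γ) atTop (Metric.closedBall (0:ℂ) 1) := by
    apply tendstoUniformlyOn_tsum_nat (summable_abs_gcoef hγ1 hγ2)
    intro k y hy
    rw [Metric.mem_closedBall, dist_eq_norm, sub_zero] at hy
    rw [norm_mul, norm_pow, Complex.norm_real, Real.norm_eq_abs]
    calc |gcoef γ k| * ‖y‖ ^ k ≤ |gcoef γ k| * 1 := by
          apply mul_le_mul_of_nonneg_left _ (abs_nonneg _)
          exact pow_le_one₀ (norm_nonneg y) hy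
      _ = |gcoef γ k| := mul_one _
  apply hTU.continuousOn
  apply Frequently.of_forall
  intro n
  apply Continuous.continuousOn
  exact continuous_finset_sum _ (fun k _ => continuous_const.mul (continuous_pow k))

lemma Sfun_eq_cpow {z : ℂ} (hz : ‖z‖ ≤ 1) : Sfun γ z = (1 - z) ^ (γ : ℂ) := by
  rcases lt_or_eq_of_le hz with h | h
  · exact Sfun_eq_cpow_ball hγ1 hγ2 h
  have hz1 : ‖z‖ = 1 := h
  have hmemc : z ∈ Metric.closedBall (0:ℂ) 1 := by
    rw [Metric.mem_closedBall, dist_eq_norm, sub_zero]; exact hz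
  -- limit along the radius
  have hpath : Tendsto (fun r : ℝ => (r : ℂ) * z) (𝓝[<] (1:ℝ))
      (𝓝[Metric.closedBall (0:ℂ) 1] z) := by
    apply tendsto_nhdsWithin_of_tendsto_nhds_of_eventually_within
    · have : Tendsto (fun r : ℝ => (r : ℂ) * z) (𝓝 (1:ℝ)) (𝓝 ((1:ℂ) * z)) :=
        (Complex.continuous_ofReal.mul continuous_const).tendsto 1
      rw [one_mul] at this
      exact this.mono_left nhdsWithin_le_nhds
    · filter_upwards [Ioo_mem_nhdsLT_of_mem (by norm_num : (1:ℝ) ∈ Set.Ioc 0 1)] with r hr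
      rw [Metric.mem_closedBall, dist_eq_norm, sub_zero, norm_mul, Complex.norm_real,
        Real.norm_eq_abs, hz1, mul_one, abs_of_pos hr.1]
      exact hr.2.le
  have h1 : Tendsto (fun r : ℝ => Sfun γ ((r:ℂ) * z)) (𝓝[<] (1:ℝ)) (𝓝 (Sfun γ z)) :=
    ((continuousOn_Sfun hγ1 hγ2).continuousWithinAt hmemc).tendsto.comp hpath
  have h2 : Tendsto (fun r : ℝ => Sfun γ ((r:ℂ) * z)) (𝓝[<] (1:ℝ)) (𝓝 ((1 - z) ^ (γ:ℂ))) := by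
    have heq : ∀ᶠ r : ℝ in 𝓝[<] (1:ℝ), Sfun γ ((r:ℂ) * z) = (1 - (r:ℂ)*z) ^ (γ:ℂ) := by
      filter_upwards [Ioo_mem_nhdsLT_of_mem (by norm_num : (1:ℝ) ∈ Set.Ioc 0 1)] with r hr
      apply Sfun_eq_cpow_ball hγ1 hγ2
      rw [norm_mul, Complex.norm_real, Real.norm_eq_abs, hz1, mul_one, abs_of_pos hr.1]
      exact hr.2
    rw [tendsto_congr' heq]
    by_cases hone : z = 1
    · subst hone
      -- (1 - r)^γ → 0 = (1-1)^γ
      have target : ((1:ℂ) - 1) ^ (γ:ℂ) = 0 := by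
        rw [sub_self, Complex.zero_cpow]
        exact_mod_cast Complex.ofReal_ne_zero.2 (by linarith)
      rw [target]
      have hev : ∀ᶠ r : ℝ in 𝓝[<] (1:ℝ), (1 - (r:ℂ) * 1) ^ (γ:ℂ) = (((1 - r) ^ γ : ℝ) : ℂ) := by
        filter_upwards [Ioo_mem_nhdsLT_of_mem (by norm_num : (1:ℝ) ∈ Set.Ioc 0 1)] with r hr
        rw [mul_one]
        rw [← Complex.ofReal_one, ← Complex.ofReal_sub, Complex.ofReal_cpow (by linarith [hr.2] : (0:ℝ) ≤ 1 - r)]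
      rw [tendsto_congr' hev]
      rw [← Complex.ofReal_zero]
      apply Tendsto.comp (Complex.continuous_ofReal.tendsto 0)
      have : Tendsto (fun r : ℝ => 1 - r) (𝓝[<] (1:ℝ)) (𝓝 (0:ℝ)) := by
        have h' : Tendsto (fun r : ℝ => 1 - r) (𝓝 (1:ℝ)) (𝓝 ((1:ℝ) - 1)) :=
          (continuous_const.sub continuous_id).tendsto 1
        rw [sub_self] at h'
        exact h'.mono_left nhdsWithin_le_nhds
      have hcont : ContinuousAt (fun x : ℝ => x ^ γ) 0 :=
        Real.continuousAt_rpow_const 0 γ (Or.inr (by linarith))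
      have := hcont.tendsto.comp this
      rw [Real.zero_rpow (by linarith : γ ≠ 0)] at this
      exact this
    · -- z ≠ 1 : continuity of cpow at 1 - z ∈ slitPlane
      have hslit : (1 - z) ∈ Complex.slitPlane := by
        rw [Complex.mem_slitPlane_iff]
        by_cases him : z.im = 0
        · left
          have hz' : z = ((z.re : ℝ) : ℂ) := Complex.ext rfl (by simp [him])
          have habs : |z.re| = 1 := by
            rw [hz'] at hz1
            rwa [Complex.norm_real, Real.norm_eq_abs] at hz1
          rcases (abs_eq (by norm_num : (0:ℝ) ≤ 1)).1 habs with h1 | h1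
          · exact absurd (by rw [hz', h1]; norm_num) hone
          · rw [Complex.sub_re, Complex.one_re, h1]; norm_num
        · right
          simpa [Complex.sub_im] using him
      have hcont : ContinuousAt (fun w : ℂ => w ^ (γ:ℂ)) (1 - z) :=
        continuousAt_cpow_const hslit
      have hbase : Tendsto (fun r : ℝ => 1 - (r:ℂ) * z) (𝓝[<] (1:ℝ)) (𝓝 (1 - z)) := by
        have : Tendsto (fun r : ℝ => 1 - (r:ℂ) * z) (𝓝 (1:ℝ)) (𝓝 (1 - (1:ℂ) * z)) :=
          (continuous_const.sub (Complex.continuous_ofReal.mul continuous_const)).tendsto 1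
        rw [one_mul] at this
        exact this.mono_left nhdsWithin_le_nhds
      exact hcont.tendsto.comp hbase
  exact tendsto_nhds_unique h1 h2
end




section
variable {γ : ℝ} (hγ1 : 1 < γ) (hγ2 : γ < 2)
include hγ1 hγ2


lemma summable_bnd : Summable (fun k : ℕ => γ/2 * |gcoef γ k| + (2-γ)/2 * |gcoef γ (k-1)|) := by
  have ha := summable_abs_gcoef hγ1 hγ2
  apply Summable.add (ha.mul_left _)
  apply Summable.mul_left
  apply (summable_nat_add_iff 1).1
  simpa using ha

lemma abs_w_le (k : ℕ) : |w γ k| ≤ γ/2 * |gcoef γ k| + (2-γ)/2 * |gcoef γ (k-1)| := by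
  have h1 : (0:ℝ) ≤ γ/2 := by linarith
  have h2 : (0:ℝ) ≤ (2-γ)/2 := by linarith
  cases k with
  | zero =>
    simp only [w, Nat.zero_sub]
    rw [abs_mul, _root_.abs_of_nonneg h1]
    nlinarith [abs_nonneg (gcoef γ 0)]
  | succ n =>
    simp only [w, Nat.add_sub_cancel]
    calc |γ/2 * gcoef γ (n+1) + (2-γ)/2 * gcoef γ n|
        ≤ |γ/2 * gcoef γ (n+1)| + |(2-γ)/2 * gcoef γ n| := abs_add_le _ _
      _ = γ/2 * |gcoef γ (n+1)| + (2-γ)/2 * |gcoef γ n| := by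
          rw [abs_mul, abs_mul, _root_.abs_of_nonneg h1, _root_.abs_of_nonneg h2]

lemma summable_wz {z : ℂ} (hz : ‖z‖ ≤ 1) : Summable (fun k : ℕ => (w γ k : ℂ) * z ^ k) := by
  apply Summable.of_norm
  apply (summable_bnd hγ1 hγ2).of_nonneg_of_le (fun k => norm_nonneg _)
  intro k
  rw [norm_mul, norm_pow, Complex.norm_real, Real.norm_eq_abs]
  calc |w γ k| * ‖z‖ ^ k ≤ |w γ k| * 1 :=
        mul_le_mul_of_nonneg_left (pow_le_one₀ (norm_nonneg z) hz) (abs_nonneg _)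
    _ = |w γ k| := mul_one _
    _ ≤ _ := abs_w_le hγ1 hγ2 k

lemma Wsum {z : ℂ} (hz : ‖z‖ ≤ 1) :
    ∑' k : ℕ, (w γ k : ℂ) * z ^ k = ((γ:ℂ)/2 + ((2:ℂ)-(γ:ℂ))/2 * z) * Sfun γ z := by
  have hS := summable_S hz hγ1 hγ2
  have hA : Summable (fun k : ℕ => ((γ:ℂ)/2) * ((gcoef γ k : ℂ) * z^k)) := hS.mul_left _
  have hB : Summable (fun k : ℕ => (((2:ℂ)-(γ:ℂ))/2 * z) * ((gcoef γ k : ℂ) * z^k)) :=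
    hS.mul_left _
  have hW := summable_wz hγ1 hγ2 hz
  rw [Summable.tsum_eq_zero_add hW]
  have e1 : ∀ k : ℕ, (w γ (k+1) : ℂ) * z^(k+1) =
      ((γ:ℂ)/2) * ((gcoef γ (k+1) : ℂ) * z^(k+1)) +
        (((2:ℂ)-(γ:ℂ))/2 * z) * ((gcoef γ k : ℂ) * z^k) := by
    intro k
    simp only [w]
    push_cast
    ring
  calc (w γ 0 : ℂ) * z^0 + ∑' k : ℕ, (w γ (k+1) : ℂ) * z^(k+1)
      = ((γ:ℂ)/2) * ((gcoef γ 0 : ℂ) * z^0) +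
        ∑' k : ℕ, (((γ:ℂ)/2) * ((gcoef γ (k+1) : ℂ) * z^(k+1)) +
          (((2:ℂ)-(γ:ℂ))/2 * z) * ((gcoef γ k : ℂ) * z^k)) := by
        rw [tsum_congr e1]
        congr 1
        simp only [w]
        push_cast
        ring
    _ = ((γ:ℂ)/2) * ((gcoef γ 0 : ℂ) * z^0) +
        (∑' k : ℕ, ((γ:ℂ)/2) * ((gcoef γ (k+1) : ℂ) * z^(k+1)) +
          ∑' k : ℕ, (((2:ℂ)-(γ:ℂ))/2 * z) * ((gcoef γ k : ℂ) * z^k)) := by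
        rw [Summable.tsum_add ((summable_nat_add_iff 1).2 hA) hB]
    _ = (∑' k : ℕ, ((γ:ℂ)/2) * ((gcoef γ k : ℂ) * z^k)) +
          ∑' k : ℕ, (((2:ℂ)-(γ:ℂ))/2 * z) * ((gcoef γ k : ℂ) * z^k) := by
        rw [Summable.tsum_eq_zero_add hA]
        ring
    _ = ((γ:ℂ)/2) * Sfun γ z + (((2:ℂ)-(γ:ℂ))/2 * z) * Sfun γ z := by
        rw [tsum_mul_left, tsum_mul_left]
        rfl
    _ = ((γ:ℂ)/2 + ((2:ℂ)-(γ:ℂ))/2 * z) * Sfun γ z := by ring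

omit hγ1 hγ2 in
lemma norm_exp_eq_one (c : ℂ) (hc : c.re = 0) : ‖Complex.exp c‖ = 1 := by
  rw [Complex.norm_exp, hc, Real.exp_zero]

lemma fsym_eq (ξ : ℝ) :
    fsym γ ξ = -(Complex.exp (-(Complex.I * ξ)) *
      (((γ:ℂ)/2 + ((2:ℂ)-(γ:ℂ))/2 * Complex.exp (Complex.I * ξ)) *
        (1 - Complex.exp (Complex.I * ξ)) ^ (γ:ℂ))) := by
  have hz : ‖Complex.exp (Complex.I * ξ)‖ = 1 := by
    apply norm_exp_eq_one
    simp [Complex.mul_re]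
  have termeq : ∀ k : ℕ, (w γ k : ℂ) * Complex.exp (Complex.I * ((k : ℂ) - 1) * ξ) =
      Complex.exp (-(Complex.I * ξ)) * ((w γ k : ℂ) * (Complex.exp (Complex.I * ξ)) ^ k) := by
    intro k
    have harg : Complex.I * ((k : ℂ) - 1) * (ξ:ℂ) = -(Complex.I * ξ) + (k:ℂ) * (Complex.I * ξ) := by
      ring
    rw [harg, Complex.exp_add, Complex.exp_nat_mul]
    ring
  rw [fsym, tsum_congr termeq, tsum_mul_left, Wsum hγ1 hγ2 hz.le,
    Sfun_eq_cpow hγ1 hγ2 hz.le]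

lemma fsym_zero : fsym γ 0 = 0 := by
  rw [fsym_eq hγ1 hγ2]
  have h1 : Complex.exp (Complex.I * (0:ℝ)) = 1 := by
    simp
  rw [h1, sub_self, Complex.zero_cpow (by exact_mod_cast Complex.ofReal_ne_zero.2 (by linarith) : (γ:ℂ) ≠ 0)]
  simp

omit hγ1 hγ2 in
lemma fsym_neg (ξ : ℝ) : fsym γ (-ξ) = conj (fsym γ ξ) := by
  have hconj : conj (∑' k : ℕ, (w γ k : ℂ) * Complex.exp (Complex.I * ((k : ℂ) - 1) * (ξ:ℂ))) =
      ∑' k : ℕ, conj ((w γ k : ℂ) * Complex.exp (Complex.I * ((k : ℂ) - 1) * (ξ:ℂ))) := by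
    simpa only [RCLike.star_def] using
      (tsum_star (f := fun k : ℕ => (w γ k : ℂ) * Complex.exp (Complex.I * ((k : ℂ) - 1) * (ξ:ℂ))))
  rw [fsym, fsym, map_neg, hconj]
  congr 1
  apply tsum_congr
  intro k
  rw [map_mul, Complex.conj_ofReal, ← Complex.exp_conj]
  congr 2
  simp only [map_mul, map_sub, Complex.conj_I, Complex.conj_ofReal, map_one, map_natCast]
  push_cast
  ring
end



section
variable {γ : ℝ} (hγ1 : 1 < γ) (hγ2 : γ < 2)
include hγ1 hγ2


lemma fsym_div_tendsto :
    Tendsto (fun ξ : ℝ => fsym γ ξ / ((ξ ^ γ : ℝ) : ℂ)) (𝓝[>] (0:ℝ))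
      (𝓝 (-((-Complex.I) ^ (γ:ℂ)))) := by
  set u : ℝ → ℂ := fun ξ => (1 - Complex.exp (Complex.I * ξ)) / ξ with hu_def
  have h_u : Tendsto u (𝓝[>] (0:ℝ)) (𝓝 (-Complex.I)) := by
    have hf : HasDerivAt (fun ξ : ℝ => Complex.exp (Complex.I * ξ)) Complex.I 0 := by
      have h1 : HasDerivAt (fun z : ℂ => Complex.exp (Complex.I * z))
          (Complex.exp (Complex.I * (0:ℂ)) * (Complex.I * 1)) 0 :=
        ((hasDerivAt_id (0:ℂ)).const_mul Complex.I).cexp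
      have h2 := h1.comp_ofReal
      simpa using h2
    have hslope := hasDerivAt_iff_tendsto_slope.1 hf
    have hsub : 𝓝[>] (0:ℝ) ≤ 𝓝[≠] (0:ℝ) :=
      nhdsWithin_mono 0 (fun x hx => ne_of_gt hx)
    have hneg : Tendsto (fun ξ : ℝ =>
        -(slope (fun ξ : ℝ => Complex.exp (Complex.I * ξ)) 0 ξ))
        (𝓝[>] (0:ℝ)) (𝓝 (-Complex.I)) := (hslope.mono_left hsub).neg
    apply hneg.congr
    intro ξ
    rw [slope]
    simp only [hu_def, vsub_eq_sub, sub_zero, Complex.ofReal_zero, mul_zero, Complex.exp_zero]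
    rw [← smul_neg, neg_sub, Complex.real_smul, Complex.ofReal_inv, inv_mul_eq_div]
  have h_cpow : Tendsto (fun ξ : ℝ => (u ξ) ^ (γ:ℂ)) (𝓝[>] (0:ℝ))
      (𝓝 ((-Complex.I) ^ (γ:ℂ))) := by
    have hslit : (-Complex.I) ∈ Complex.slitPlane := by
      rw [Complex.mem_slitPlane_iff]
      right
      simp
    exact (continuousAt_cpow_const hslit).tendsto.comp h_u
  -- eventual equality
  have h_ev : ∀ᶠ ξ in 𝓝[>] (0:ℝ), fsym γ ξ / ((ξ ^ γ : ℝ) : ℂ) =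
      -(Complex.exp (-(Complex.I * ξ)) *
        (((γ:ℂ)/2 + ((2:ℂ)-(γ:ℂ))/2 * Complex.exp (Complex.I * ξ)) * (u ξ) ^ (γ:ℂ))) := by
    filter_upwards [Ioo_mem_nhdsGT_of_mem (by norm_num : (0:ℝ) ∈ Set.Ico 0 1)] with ξ hξ
    have hξ0 : 0 < ξ := hξ.1
    have hξ1 : ξ < 1 := hξ.2
    have hξc : ((ξ:ℝ):ℂ) ≠ 0 := Complex.ofReal_ne_zero.2 hξ0.ne'
    have hne : 1 - Complex.exp (Complex.I * ξ) ≠ 0 := by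
      rw [sub_ne_zero]
      intro h
      have him : (Complex.exp (Complex.I * ξ)).im = 0 := by rw [← h]; simp
      rw [mul_comm, Complex.exp_ofReal_mul_I_im] at him
      have : 0 < Real.sin ξ := Real.sin_pos_of_pos_of_lt_pi hξ0 (by linarith [Real.pi_gt_three])
      linarith
    have hu_ne : u ξ ≠ 0 := div_ne_zero hne hξc
    have hfact : 1 - Complex.exp (Complex.I * ξ) = (ξ:ℂ) * u ξ := by
      rw [hu_def]
      field_simp
    have hsplit : (1 - Complex.exp (Complex.I * ξ)) ^ (γ:ℂ) =
        ((ξ ^ γ : ℝ) : ℂ) * (u ξ) ^ (γ:ℂ) := by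
      rw [hfact, Complex.cpow_def_of_ne_zero (mul_ne_zero hξc hu_ne),
        Complex.log_ofReal_mul hξ0 hu_ne, add_mul, Complex.exp_add,
        ← Complex.cpow_def_of_ne_zero hu_ne]
      congr 1
      rw [Real.rpow_def_of_pos hξ0, Complex.ofReal_exp]
      congr 1
      push_cast
      ring
    rw [fsym_eq hγ1 hγ2 ξ, hsplit]
    have hr : ((ξ ^ γ : ℝ) : ℂ) ≠ 0 :=
      Complex.ofReal_ne_zero.2 (Real.rpow_pos_of_pos hξ0 γ).ne'
    field_simp
  rw [tendsto_congr' h_ev]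
  have t1 : Tendsto (fun ξ : ℝ => Complex.exp (-(Complex.I * ξ))) (𝓝[>] (0:ℝ)) (𝓝 1) := by
    have hc : Continuous (fun ξ : ℝ => Complex.exp (-(Complex.I * ξ))) := by
      apply Complex.continuous_exp.comp
      exact (continuous_const.mul Complex.continuous_ofReal).neg
    have := (hc.tendsto 0).mono_left (nhdsWithin_le_nhds (s := Set.Ioi (0:ℝ)))
    simpa using this
  have t2 : Tendsto (fun ξ : ℝ => (γ:ℂ)/2 + ((2:ℂ)-(γ:ℂ))/2 * Complex.exp (Complex.I * ξ))
      (𝓝[>] (0:ℝ)) (𝓝 ((γ:ℂ)/2 + ((2:ℂ)-(γ:ℂ))/2 * 1)) := by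
    have hc : Continuous (fun ξ : ℝ => (γ:ℂ)/2 + ((2:ℂ)-(γ:ℂ))/2 * Complex.exp (Complex.I * ξ)) := by
      apply continuous_const.add
      apply continuous_const.mul
      exact Complex.continuous_exp.comp (continuous_const.mul Complex.continuous_ofReal)
    have := (hc.tendsto 0).mono_left (nhdsWithin_le_nhds (s := Set.Ioi (0:ℝ)))
    simpa using this
  have := (t1.mul (t2.mul h_cpow)).neg
  have heq : -(1 * (((γ:ℂ)/2 + ((2:ℂ)-(γ:ℂ))/2 * 1) * (-Complex.I) ^ (γ:ℂ))) =
      -((-Complex.I) ^ (γ:ℂ)) := by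
    have : (γ:ℂ)/2 + ((2:ℂ)-(γ:ℂ))/2 * 1 = 1 := by ring
    rw [this]
    ring
  rw [heq] at this
  exact this
end


section
variable {γ : ℝ} (hγ1 : 1 < γ) (hγ2 : γ < 2)
include hγ1 hγ2


lemma neg_I_cpow :
    (-Complex.I) ^ (γ:ℂ) = ((Real.cos (γ * Real.pi / 2) : ℝ) : ℂ) -
      ((Real.sin (γ * Real.pi / 2) : ℝ) : ℂ) * Complex.I := by
  rw [Complex.cpow_def_of_ne_zero (by simp : (-Complex.I) ≠ 0), Complex.log_neg_I]
  have harg : -(↑Real.pi / 2) * Complex.I * (γ:ℂ) = ((-(γ * Real.pi / 2) : ℝ) : ℂ) * Complex.I := by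
    push_cast
    ring
  rw [harg, Complex.exp_mul_I]
  rw [← Complex.ofReal_cos, ← Complex.ofReal_sin]
  rw [Real.cos_neg, Real.sin_neg]
  push_cast
  ring

lemma axis_limit (c cp cm : ℝ) (hc : 0 < c) :
    Tendsto (fun ξ : ℝ => ((cp:ℂ) * fsym γ ξ + (cm:ℂ) * fsym γ (-ξ)) /
        (((c * (fsym γ ξ + fsym γ (-ξ)).re : ℝ)) : ℂ)) (𝓝[>] (0:ℝ))
      (𝓝 ((((cp + cm) / (2 * c) : ℝ) : ℂ) -
        Complex.I * ((Real.tan (γ * Real.pi / 2) * ((cp - cm) / (2 * c)) : ℝ) : ℂ))) := by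
  set θ := γ * Real.pi / 2 with hθdef
  have hpi := Real.pi_pos
  have hθ1 : Real.pi / 2 < θ := by rw [hθdef]; nlinarith
  have hθ2 : θ < Real.pi := by rw [hθdef]; nlinarith
  have hcos : Real.cos θ < 0 := Real.cos_neg_of_pi_div_two_lt_of_lt hθ1 (by linarith)
  set L : ℂ := -((-Complex.I) ^ (γ:ℂ)) with hLdef
  have hL : L = ((-Real.cos θ : ℝ) : ℂ) + ((Real.sin θ : ℝ) : ℂ) * Complex.I := by
    rw [hLdef, neg_I_cpow hγ1 hγ2, ← hθdef]
    push_cast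
    ring
  have hLc : conj L = ((-Real.cos θ : ℝ) : ℂ) - ((Real.sin θ : ℝ) : ℂ) * Complex.I := by
    rw [hL]
    simp only [map_add, map_mul, Complex.conj_ofReal, Complex.conj_I]
    ring
  have hv := fsym_div_tendsto hγ1 hγ2
  rw [← hLdef] at hv
  have hvc : Tendsto (fun ξ : ℝ => conj (fsym γ ξ / ((ξ ^ γ : ℝ) : ℂ))) (𝓝[>] (0:ℝ))
      (𝓝 (conj L)) := (Complex.continuous_conj.tendsto L).comp hv
  set N : ℂ := (cp:ℂ) * L + (cm:ℂ) * conj L with hNdef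
  set Dc : ℂ := (c:ℂ) * (L + conj L) with hDdef
  have hnum : Tendsto (fun ξ : ℝ => (cp:ℂ) * (fsym γ ξ / ((ξ ^ γ : ℝ) : ℂ)) +
      (cm:ℂ) * conj (fsym γ ξ / ((ξ ^ γ : ℝ) : ℂ))) (𝓝[>] (0:ℝ)) (𝓝 N) :=
    (tendsto_const_nhds.mul hv).add (tendsto_const_nhds.mul hvc)
  have hden : Tendsto (fun ξ : ℝ => (c:ℂ) * ((fsym γ ξ / ((ξ ^ γ : ℝ) : ℂ)) +
      conj (fsym γ ξ / ((ξ ^ γ : ℝ) : ℂ)))) (𝓝[>] (0:ℝ)) (𝓝 Dc) :=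
    tendsto_const_nhds.mul (hv.add hvc)
  have hD_ne : Dc ≠ 0 := by
    rw [hDdef, hLc, hL]
    intro h
    have h2 : (c:ℂ) * (((-(2 * Real.cos θ) : ℝ)) : ℂ) = 0 := by
      rw [← h]; push_cast; ring
    rcases mul_eq_zero.1 h2 with h3 | h3
    · exact hc.ne' (by exact_mod_cast h3)
    · have : -(2 * Real.cos θ) = 0 := by exact_mod_cast h3
      linarith
  have hratio := hnum.div hden hD_ne
  have hNDc : N / Dc = (((cp + cm) / (2 * c) : ℝ) : ℂ) -
      Complex.I * ((Real.tan θ * ((cp - cm) / (2 * c)) : ℝ) : ℂ) := by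
    have hkey : N = Dc * ((((cp + cm) / (2 * c) : ℝ) : ℂ) -
        Complex.I * ((Real.tan θ * ((cp - cm) / (2 * c)) : ℝ) : ℂ)) := by
      rw [hNdef, hDdef, hLc, hL, Real.tan_eq_sin_div_cos]
      set a := Real.cos θ with ha
      set b := Real.sin θ with hb
      have hcosC : ((a : ℝ) : ℂ) ≠ 0 := Complex.ofReal_ne_zero.2 hcos.ne
      have hcC : ((c : ℝ) : ℂ) ≠ 0 := Complex.ofReal_ne_zero.2 hc.ne'
      push_cast
      field_simp
      ring
    rw [hkey, mul_comm, mul_div_assoc, div_self hD_ne, mul_one]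
  rw [hNDc] at hratio
  apply hratio.congr'
  filter_upwards [self_mem_nhdsWithin] with ξ (hξ : 0 < ξ)
  have hr : ((ξ ^ γ : ℝ) : ℂ) ≠ 0 :=
    Complex.ofReal_ne_zero.2 (Real.rpow_pos_of_pos hξ γ).ne'
  rw [fsym_neg ξ]
  have hden_eq : ((c * (fsym γ ξ + conj (fsym γ ξ)).re : ℝ) : ℂ) =
      (c:ℂ) * (fsym γ ξ + conj (fsym γ ξ)) := by
    rw [Complex.add_conj]
    simp only [Complex.ofReal_re]
    push_cast
    ring
  rw [hden_eq]
  have hconj_div : conj (fsym γ ξ / ((ξ ^ γ : ℝ) : ℂ)) = conj (fsym γ ξ) / ((ξ ^ γ : ℝ) : ℂ) := by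
    rw [map_div₀, Complex.conj_ofReal]
  simp only [Pi.div_apply, hconj_div, ← add_div, ← mul_div_assoc]
  rw [div_div_div_cancel_right₀ hr]
end

section
variable {γ : ℝ}

end

/-- One-sided limits of `h/𝓕` along the coordinate axes. -/
theorem hsym_over_Fsym_axis_limits (α β d e ρ dp dm ep em : ℝ)
    (hα : α ∈ Set.Ioo (1 : ℝ) 2) (hβ : β ∈ Set.Ioo (1 : ℝ) 2)
    (hd : 0 < d) (he : 0 < e) (hρ : 0 < ρ)
    (hdp : 0 < dp) (hdm : 0 < dm) (hep : 0 < ep) (hem : 0 < em) :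
    Tendsto (fun θ₁ : ℝ =>
        hsym α β ρ dp dm ep em θ₁ 0 / ((FsymR α β d e ρ θ₁ 0 : ℝ) : ℂ))
      (𝓝[>] (0 : ℝ))
      (𝓝 ((((dp + dm) / (2 * d) : ℝ) : ℂ) -
        Complex.I * ((Real.tan (α * Real.pi / 2) * ((dp - dm) / (2 * d)) : ℝ) : ℂ))) ∧
    Tendsto (fun θ₂ : ℝ =>
        hsym α β ρ dp dm ep em 0 θ₂ / ((FsymR α β d e ρ 0 θ₂ : ℝ) : ℂ))
      (𝓝[>] (0 : ℝ))
      (𝓝 ((((ep + em) / (2 * e) : ℝ) : ℂ) -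
        Complex.I * ((Real.tan (β * Real.pi / 2) * ((ep - em) / (2 * e)) : ℝ) : ℂ))) := by
  have hfa0 : fsym α 0 = 0 := fsym_zero hα.1 hα.2
  have hfb0 : fsym β 0 = 0 := fsym_zero hβ.1 hβ.2
  constructor
  · apply Tendsto.congr _ (axis_limit hα.1 hα.2 d dp dm hd)
    intro ξ
    have h1 : hsym α β ρ dp dm ep em ξ 0 = (dp:ℂ) * fsym α ξ + (dm:ℂ) * fsym α (-ξ) := by
      unfold hsym
      rw [neg_zero, hfb0]
      ring
    have h2 : FsymR α β d e ρ ξ 0 = d * (fsym α ξ + fsym α (-ξ)).re := by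
      unfold FsymR qsym
      rw [neg_zero, hfb0]
      simp
    rw [h1, h2]
  · apply Tendsto.congr _ (axis_limit hβ.1 hβ.2 e ep em he)
    intro ξ
    have h1 : hsym α β ρ dp dm ep em 0 ξ =
        (ρ:ℂ) * ((ep:ℂ) * fsym β ξ + (em:ℂ) * fsym β (-ξ)) := by
      unfold hsym
      rw [neg_zero, hfa0]
      ring
    have h2 : FsymR α β d e ρ 0 ξ = ρ * (e * (fsym β ξ + fsym β (-ξ)).re) := by
      unfold FsymR qsym
      rw [neg_zero, hfa0]
      simp
      ring
    rw [h1, h2, Complex.ofReal_mul, Complex.ofReal_mul,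
      mul_div_mul_left _ _ (Complex.ofReal_ne_zero.2 hρ.ne'), Complex.ofReal_mul]
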